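/- For every n ≥ 1, the multivariate Eulerian polynomial A_n(x,y) = Σ_{σ ∈ S_{n+1}} ∏_{i ∈ DT(σ)} x_i · ∏_{j ∈ AT(σ)} y_j ∈ ℝ[x_2,...,x_{n+1}, y_2,...,y_{n+1}] is real stable. -/

import Mathlib

/-- Descent top set of a permutation `σ` of `Fin (n+1)`:
`DT(σ) = {σ(i) : i ∈ {1,...,n}, σ(i) > σ(i+1)}`. -/
def descentTops (n : ℕ) (σ : Equiv.Perm (Fin (n + 1))) : Finset (Fin (n + 1)) :=
  (Finset.univ.filter fun i : Fin n => σ i.succ < σ i.castSucc).image fun i => σ i.castSucc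

/-- Ascent top set of a permutation `σ` of `Fin (n+1)`:
`AT(σ) = {σ(i+1) : i ∈ {1,...,n}, σ(i) < σ(i+1)}`. -/
def ascentTops (n : ℕ) (σ : Equiv.Perm (Fin (n + 1))) : Finset (Fin (n + 1)) :=
  (Finset.univ.filter fun i : Fin n => σ i.castSucc < σ i.succ).image fun i => σ i.succ

/-- The multivariate Eulerian polynomial
`A_n(x,y) = Σ_{σ ∈ S_{n+1}} ∏_{i ∈ DT(σ)} x_i · ∏_{j ∈ AT(σ)} y_j`, with the `x` variables
indexed by `Sum.inl` and the `y` variables indexed by `Sum.inr`. -/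
noncomputable def mvEulerian (n : ℕ) : MvPolynomial (Fin (n + 1) ⊕ Fin (n + 1)) ℝ :=
  ∑ σ : Equiv.Perm (Fin (n + 1)),
    (∏ i ∈ descentTops n σ, MvPolynomial.X (Sum.inl i)) *
      ∏ j ∈ ascentTops n σ, MvPolynomial.X (Sum.inr j)

/-- A polynomial over `ℂ` is stable if it is zero or does not vanish whenever every
coordinate has strictly positive imaginary part. -/
def IsStable {σ : Type*} (p : MvPolynomial σ ℂ) : Prop :=
  p = 0 ∨ ∀ z : σ → ℂ, (∀ i, 0 < (z i).im) → MvPolynomial.eval z p ≠ 0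

open MvPolynomial Finset

/-- The variable contributed by the adjacency `(i, i+1)` of `σ`. -/
noncomputable def vAdj (n : ℕ) (σ : Equiv.Perm (Fin (n + 1))) (i : Fin n) :
    MvPolynomial (Fin (n + 1) ⊕ Fin (n + 1)) ℝ :=
  if σ i.succ < σ i.castSucc then X (Sum.inl (σ i.castSucc)) else X (Sum.inr (σ i.succ))

noncomputable def dEuler (n : ℕ) : MvPolynomial (Fin (n + 1) ⊕ Fin (n + 1)) ℝ :=
  ∑ σ : Equiv.Perm (Fin (n + 1)), ∑ k : Fin n, ∏ j ∈ univ.erase k, vAdj n σ j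

lemma prodForm (n : ℕ) (σ : Equiv.Perm (Fin (n + 1))) :
    (∏ i ∈ descentTops n σ, MvPolynomial.X (R := ℝ) (Sum.inl i)) *
      ∏ j ∈ ascentTops n σ, MvPolynomial.X (Sum.inr j) = ∏ i : Fin n, vAdj n σ i := by
  have h1 : (∏ i ∈ descentTops n σ, MvPolynomial.X (R := ℝ) (Sum.inl i)) =
      ∏ i ∈ univ.filter fun i : Fin n => σ i.succ < σ i.castSucc,
        (X (Sum.inl (σ i.castSucc)) : MvPolynomial (Fin (n + 1) ⊕ Fin (n + 1)) ℝ) := by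
    rw [descentTops, Finset.prod_image]
    intro a _ b _ h
    exact Fin.castSucc_injective _ (σ.injective h)
  have h2 : (∏ j ∈ ascentTops n σ, MvPolynomial.X (R := ℝ) (Sum.inr j)) =
      ∏ i ∈ univ.filter fun i : Fin n => σ i.castSucc < σ i.succ,
        (X (Sum.inr (σ i.succ)) : MvPolynomial (Fin (n + 1) ⊕ Fin (n + 1)) ℝ) := by
    rw [ascentTops, Finset.prod_image]
    intro a _ b _ h
    exact Fin.succ_injective _ (σ.injective h)
  have h3 : (univ.filter fun i : Fin n => σ i.castSucc < σ i.succ) =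
      univ.filter fun i : Fin n => ¬ (σ i.succ < σ i.castSucc) := by
    apply Finset.filter_congr
    intro i _
    simp only [not_lt, eq_iff_iff]
    constructor
    · exact le_of_lt
    · intro h
      rcases lt_or_eq_of_le h with h' | h'
      · exact h'
      · exact absurd (σ.injective h') (Fin.ne_of_lt (Fin.castSucc_lt_succ (i := i)))
  rw [h1, h2, h3, ← Finset.prod_filter_mul_prod_filter_not univ
    (fun i : Fin n => σ i.succ < σ i.castSucc) (vAdj n σ)]
  congr 1
  · exact Finset.prod_congr rfl fun i hi => by
      rw [vAdj, if_pos (Finset.mem_filter.mp hi).2]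
  · exact Finset.prod_congr rfl fun i hi => by
      rw [vAdj, if_neg (Finset.mem_filter.mp hi).2]

lemma mvEulerian_eq (n : ℕ) :
    mvEulerian n = ∑ σ : Equiv.Perm (Fin (n + 1)), ∏ i : Fin n, vAdj n σ i := by
  unfold mvEulerian
  exact Finset.sum_congr rfl fun σ _ => prodForm n σ

open MvPolynomial Finset



/-- Insert the value `last` at position `p` into the one-line notation of `τ`. -/
def insPerm (n : ℕ) (p : Fin (n + 2)) (τ : Equiv.Perm (Fin (n + 1))) : Equiv.Perm (Fin (n + 2)) where
  toFun := Fin.insertNth p (Fin.last (n + 1)) (fun j => (τ j).castSucc)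
  invFun := Fin.lastCases p (fun w => p.succAbove (τ.symm w))
  left_inv := by
    intro i
    refine Fin.succAboveCases p ?_ (fun j => ?_) i
    · simp
    · simp
  right_inv := by
    intro w
    refine Fin.lastCases ?_ (fun v => ?_) w
    · simp
    · simp

@[simp] lemma insPerm_same (n : ℕ) (p : Fin (n + 2)) (τ : Equiv.Perm (Fin (n + 1))) :
    insPerm n p τ p = Fin.last (n + 1) := by
  simp [insPerm]

@[simp] lemma insPerm_succAbove (n : ℕ) (p : Fin (n + 2)) (τ : Equiv.Perm (Fin (n + 1)))
    (j : Fin (n + 1)) : insPerm n p τ (p.succAbove j) = (τ j).castSucc := by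
  simp [insPerm]

lemma ins_bij (n : ℕ) : Function.Bijective
    (fun pt : Fin (n + 2) × Equiv.Perm (Fin (n + 1)) => insPerm n pt.1 pt.2) := by
  rw [Fintype.bijective_iff_injective_and_card]
  constructor
  · rintro ⟨p, τ⟩ ⟨p', τ'⟩ h
    simp only at h
    have hp : p = p' := by
      by_contra hne
      obtain ⟨j, hj⟩ := Fin.exists_succAbove_eq hne
      have h2 : insPerm n p' τ' p = Fin.last (n + 1) := by rw [← h]; simp
      rw [← hj, insPerm_succAbove] at h2
      exact absurd h2 (Fin.ne_of_lt (Fin.castSucc_lt_last _))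
    subst hp
    have hτ : τ = τ' := by
      apply Equiv.ext
      intro j
      have h2 : insPerm n p τ (p.succAbove j) = insPerm n p τ' (p.succAbove j) := by rw [h]
      simpa using h2
    rw [hτ]
  · simp [Fintype.card_perm, Nat.factorial_succ]


/-- The variable-relabeling embedding. -/
def emb (n : ℕ) : Fin (n + 1) ⊕ Fin (n + 1) → Fin (n + 2) ⊕ Fin (n + 2) :=
  Sum.map Fin.castSucc Fin.castSucc

lemma vAdj_ins_of (n : ℕ) (p : Fin (n + 2)) (τ : Equiv.Perm (Fin (n + 1))) (k : Fin n)
    (i : Fin (n + 1)) (h1 : i.castSucc = p.succAbove k.castSucc)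
    (h2 : i.succ = p.succAbove k.succ) :
    vAdj (n + 1) (insPerm n p τ) i = rename (emb n) (vAdj n τ k) := by
  unfold vAdj
  rw [h1, h2, insPerm_succAbove, insPerm_succAbove, apply_ite (rename (emb n)), rename_X,
    rename_X]
  simp [emb, Fin.castSucc_lt_castSucc_iff]

lemma prod_ins_zero (n : ℕ) (τ : Equiv.Perm (Fin (n + 1))) :
    ∏ i : Fin (n + 1), vAdj (n + 1) (insPerm n 0 τ) i =
      X (Sum.inl (Fin.last (n + 1))) * rename (emb n) (∏ k : Fin n, vAdj n τ k) := by
  rw [Fin.prod_univ_succ]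
  congr 1
  · -- vAdj at adjacency 0
    have hc : ((0 : Fin (n + 1)) : Fin (n + 1)).castSucc = (0 : Fin (n + 2)) := rfl
    have hs : (0 : Fin (n + 1)).succ = (0 : Fin (n + 2)).succAbove 0 := by
      rw [Fin.succAbove_zero]
    unfold vAdj
    rw [hs, insPerm_succAbove]
    have h0 : insPerm n 0 τ ((0 : Fin (n + 1)).castSucc) = Fin.last (n + 1) := by
      have : ((0 : Fin (n + 1)).castSucc : Fin (n + 2)) = 0 := rfl
      rw [this, insPerm_same]
    rw [h0, if_pos (Fin.castSucc_lt_last _)]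
  · rw [map_prod]
    apply Finset.prod_congr rfl
    intro k _
    apply vAdj_ins_of n 0 τ k
    · rw [Fin.succAbove_zero, Fin.succ_castSucc]
    · rw [Fin.succAbove_zero]

lemma prod_ins_last (n : ℕ) (τ : Equiv.Perm (Fin (n + 1))) :
    ∏ i : Fin (n + 1), vAdj (n + 1) (insPerm n (Fin.last (n + 1)) τ) i =
      X (Sum.inr (Fin.last (n + 1))) * rename (emb n) (∏ k : Fin n, vAdj n τ k) := by
  rw [Fin.prod_univ_castSucc, mul_comm]
  congr 1
  · -- vAdj at the last adjacency
    unfold vAdj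
    have hs : (Fin.last n).succ = Fin.last (n + 1) := Fin.succ_last n
    have hc : (Fin.last n).castSucc = (Fin.last (n + 1)).succAbove (Fin.last n) := by
      rw [Fin.succAbove_last]
    rw [hs, insPerm_same, hc, insPerm_succAbove]
    rw [if_neg (by exact not_lt.mpr (le_of_lt (Fin.castSucc_lt_last _)))]
  · rw [map_prod]
    apply Finset.prod_congr rfl
    intro k _
    apply vAdj_ins_of n (Fin.last (n + 1)) τ k
    · rw [Fin.succAbove_last]
    · rw [Fin.succAbove_last, Fin.succ_castSucc]

lemma val_succAbove {m : ℕ} (q : Fin (m + 1)) (j : Fin m) :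
    ((q.succAbove j : Fin (m + 1)) : ℕ) = if (j : ℕ) < q then (j : ℕ) else (j : ℕ) + 1 := by
  rw [Fin.succAbove]
  rcases lt_or_ge ((j : ℕ)) q with h | h
  · rw [if_pos (by rw [Fin.lt_def, Fin.coe_castSucc]; exact h), if_pos h, Fin.coe_castSucc]
  · rw [if_neg (by rw [Fin.lt_def, Fin.coe_castSucc]; omega), if_neg (by omega), Fin.val_succ]

lemma prod_ins_mid (n : ℕ) (τ : Equiv.Perm (Fin (n + 1))) (t : Fin n) :
    ∏ i : Fin (n + 1), vAdj (n + 1) (insPerm n (t.succ.castSucc) τ) i =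
      X (Sum.inl (Fin.last (n + 1))) * X (Sum.inr (Fin.last (n + 1))) *
        rename (emb n) (∏ k ∈ univ.erase t, vAdj n τ k) := by
  set p : Fin (n + 2) := t.succ.castSucc with hp
  rw [Fin.prod_univ_succAbove _ t.castSucc,
    ← Finset.mul_prod_erase univ _ (Finset.mem_univ t)]
  have hself : t.castSucc.succAbove t = t.succ :=
    Fin.succAbove_of_le_castSucc _ _ le_rfl
  rw [hself]
  have hA : vAdj (n + 1) (insPerm n p τ) t.castSucc = X (Sum.inr (Fin.last (n + 1))) := by
    unfold vAdj
    have hs : (t.castSucc : Fin (n + 1)).succ = p := by rw [Fin.succ_castSucc]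
    have hc : (t.castSucc : Fin (n + 1)).castSucc = p.succAbove t.castSucc := by
      apply Fin.ext
      rw [Fin.coe_castSucc, Fin.coe_castSucc, val_succAbove]
      have : ((t.castSucc : Fin (n + 1)) : ℕ) = (t : ℕ) := rfl
      rw [this]
      have hpv : (p : ℕ) = (t : ℕ) + 1 := rfl
      rw [if_pos (by omega)]
    rw [hs, insPerm_same, hc, insPerm_succAbove]
    rw [if_neg (not_lt.mpr (le_of_lt (Fin.castSucc_lt_last _)))]
  have hB : vAdj (n + 1) (insPerm n p τ) t.succ = X (Sum.inl (Fin.last (n + 1))) := by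
    unfold vAdj
    have hc : (t.succ : Fin (n + 1)).castSucc = p := rfl
    have hs : (t.succ : Fin (n + 1)).succ = p.succAbove t.succ := by
      apply Fin.ext
      rw [Fin.val_succ, val_succAbove]
      have hpv : (p : ℕ) = (t : ℕ) + 1 := rfl
      rw [if_neg (by rw [hpv, Fin.val_succ]; omega), Fin.val_succ]
    rw [hc, insPerm_same, hs, insPerm_succAbove]
    rw [if_pos (Fin.castSucc_lt_last _)]
  rw [hA, hB]
  have hC : ∏ k ∈ univ.erase t, vAdj (n + 1) (insPerm n p τ) (t.castSucc.succAbove k) =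
      rename (emb n) (∏ k ∈ univ.erase t, vAdj n τ k) := by
    rw [map_prod]
    apply Finset.prod_congr rfl
    intro k hk
    have hkt : (k : ℕ) ≠ (t : ℕ) := by
      have := (Finset.mem_erase.mp hk).1
      simpa [Fin.ext_iff] using this
    have hpv : (p : ℕ) = (t : ℕ) + 1 := rfl
    apply vAdj_ins_of n p τ k
    · apply Fin.ext
      rw [Fin.coe_castSucc, val_succAbove, val_succAbove]
      have hct : ((t.castSucc : Fin (n + 1)) : ℕ) = (t : ℕ) := rfl
      rw [hct, hpv]
      have hcs : ((k.castSucc : Fin (n + 1)) : ℕ) = (k : ℕ) := rfl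
      rw [hcs]
      split_ifs <;> simp <;> omega
    · apply Fin.ext
      rw [Fin.val_succ, val_succAbove, val_succAbove]
      have hct : ((t.castSucc : Fin (n + 1)) : ℕ) = (t : ℕ) := rfl
      rw [hct, hpv]
      have hcs : ((k.succ : Fin (n + 1)) : ℕ) = (k : ℕ) + 1 := rfl
      rw [hcs]
      split_ifs <;> simp <;> omega
  rw [hC]
  ring

lemma eulerRecursion (n : ℕ) :
    mvEulerian (n + 1) =
      (X (Sum.inl (Fin.last (n + 1))) + X (Sum.inr (Fin.last (n + 1)))) *
          rename (emb n) (mvEulerian n) +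
        X (Sum.inl (Fin.last (n + 1))) * X (Sum.inr (Fin.last (n + 1))) *
          rename (emb n) (dEuler n) := by
  rw [mvEulerian_eq (n + 1), mvEulerian_eq n]
  rw [← Fintype.sum_bijective _ (ins_bij n)
    (fun pt : Fin (n + 2) × Equiv.Perm (Fin (n + 1)) =>
      ∏ i : Fin (n + 1), vAdj (n + 1) (insPerm n pt.1 pt.2) i)
    (fun σ => ∏ i : Fin (n + 1), vAdj (n + 1) σ i) (fun pt => rfl)]
  rw [Fintype.sum_prod_type]
  rw [Fin.sum_univ_succ, Fin.sum_univ_castSucc]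
  have h0 : ∑ τ : Equiv.Perm (Fin (n + 1)),
      ∏ i : Fin (n + 1), vAdj (n + 1) (insPerm n 0 τ) i =
      X (Sum.inl (Fin.last (n + 1))) * rename (emb n) (∑ σ, ∏ i : Fin n, vAdj n σ i) := by
    rw [map_sum, Finset.mul_sum]
    exact Finset.sum_congr rfl fun τ _ => prod_ins_zero n τ
  have hl : ∑ τ : Equiv.Perm (Fin (n + 1)),
      ∏ i : Fin (n + 1), vAdj (n + 1) (insPerm n ((Fin.last n).succ) τ) i =
      X (Sum.inr (Fin.last (n + 1))) * rename (emb n) (∑ σ, ∏ i : Fin n, vAdj n σ i) := by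
    rw [map_sum, Finset.mul_sum]
    refine Finset.sum_congr rfl fun τ _ => ?_
    rw [Fin.succ_last]
    exact prod_ins_last n τ
  have hm : ∀ t : Fin n, ∑ τ : Equiv.Perm (Fin (n + 1)),
      ∏ i : Fin (n + 1), vAdj (n + 1) (insPerm n (t.castSucc.succ) τ) i =
      X (Sum.inl (Fin.last (n + 1))) * X (Sum.inr (Fin.last (n + 1))) *
        rename (emb n) (∑ τ : Equiv.Perm (Fin (n + 1)), ∏ k ∈ univ.erase t, vAdj n τ k) := by
    intro t
    rw [map_sum, Finset.mul_sum]
    refine Finset.sum_congr rfl fun τ _ => ?_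
    rw [Fin.succ_castSucc]
    exact prod_ins_mid n τ t
  rw [h0, hl]
  have hmsum : ∑ t : Fin n, ∑ τ : Equiv.Perm (Fin (n + 1)),
      ∏ i : Fin (n + 1), vAdj (n + 1) (insPerm n (t.castSucc.succ) τ) i =
      X (Sum.inl (Fin.last (n + 1))) * X (Sum.inr (Fin.last (n + 1))) *
        rename (emb n) (dEuler n) := by
    rw [Finset.sum_congr rfl fun t _ => hm t, ← Finset.mul_sum, ← map_sum]
    rw [dEuler, Finset.sum_comm]
  rw [hmsum]
  ring

open Polynomial in
/-- If all roots have negative imaginary part, the logarithmic derivative at `0` has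
nonpositive imaginary part. -/
lemma logDeriv_im_le (s : Multiset ℂ) (L : ℂ) (hL : L ≠ 0) (hs : ∀ r ∈ s, r.im < 0) :
    (Polynomial.C L * (s.map fun r => Polynomial.X - Polynomial.C r).prod).eval 0 ≠ 0 ∧
      ((Polynomial.derivative
          (Polynomial.C L * (s.map fun r => Polynomial.X - Polynomial.C r).prod)).eval 0 /
        (Polynomial.C L * (s.map fun r => Polynomial.X - Polynomial.C r).prod).eval 0).im
        ≤ 0 := by
  induction s using Multiset.induction_on with
  | empty => simp [hL]
  | cons a s ih =>
    have ha : a.im < 0 := hs a (Multiset.mem_cons_self a s)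
    have ha0 : a ≠ 0 := fun h => by simp [h] at ha
    obtain ⟨hA, hB⟩ := ih fun r hr => hs r (Multiset.mem_cons_of_mem hr)
    set q := Polynomial.C L * (s.map fun r => Polynomial.X - Polynomial.C r).prod with hq
    have hform : Polynomial.C L * ((a ::ₘ s).map fun r => Polynomial.X - Polynomial.C r).prod
        = (Polynomial.X - Polynomial.C a) * q := by
      rw [Multiset.map_cons, Multiset.prod_cons]; ring
    rw [hform]
    set A := q.eval 0 with hAdef
    set B := (Polynomial.derivative q).eval 0 with hBdef
    have heval : ((Polynomial.X - Polynomial.C a) * q).eval 0 = (-a) * A := by simp [hAdef]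
    have hder : (Polynomial.derivative ((Polynomial.X - Polynomial.C a) * q)).eval 0 =
        A + (-a) * B := by
      rw [Polynomial.derivative_mul]
      simp [hAdef, hBdef]
    rw [heval, hder]
    constructor
    · exact mul_ne_zero (neg_ne_zero.mpr ha0) hA
    · have hratio : (A + (-a) * B) / ((-a) * A) = -a⁻¹ + B / A := by
        field_simp
        ring
      rw [hratio]
      have h1 : (-a⁻¹).im < 0 := by
        rw [Complex.neg_im, Complex.inv_im]
        have : 0 < Complex.normSq a := Complex.normSq_pos.mpr ha0
        rw [neg_div, neg_neg]
        exact div_neg_of_neg_of_pos ha this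
      rw [Complex.add_im]
      linarith

lemma eval_vAdj_add (n : ℕ) (z : Fin (n + 1) ⊕ Fin (n + 1) → ℂ) (t : ℂ)
    (σ : Equiv.Perm (Fin (n + 1))) (i : Fin n) :
    MvPolynomial.eval (fun u => z u + t) (MvPolynomial.map (algebraMap ℝ ℂ) (vAdj n σ i)) =
      MvPolynomial.eval z (MvPolynomial.map (algebraMap ℝ ℂ) (vAdj n σ i)) + t := by
  unfold vAdj
  split <;> simp

lemma dRatio (n : ℕ)
    (IH : ∀ z : Fin (n + 1) ⊕ Fin (n + 1) → ℂ, (∀ u, 0 < (z u).im) →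
      MvPolynomial.eval z (MvPolynomial.map (algebraMap ℝ ℂ) (mvEulerian n)) ≠ 0)
    (z : Fin (n + 1) ⊕ Fin (n + 1) → ℂ) (hz : ∀ u, 0 < (z u).im) :
    MvPolynomial.eval z (MvPolynomial.map (algebraMap ℝ ℂ) (mvEulerian n)) ≠ 0 ∧
    ((MvPolynomial.eval z (MvPolynomial.map (algebraMap ℝ ℂ) (dEuler n))) /
      (MvPolynomial.eval z (MvPolynomial.map (algebraMap ℝ ℂ) (mvEulerian n)))).im ≤ 0 := by
  set g : Polynomial ℂ := ∑ σ : Equiv.Perm (Fin (n + 1)), ∏ i : Fin n,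
    (Polynomial.X + Polynomial.C
      (MvPolynomial.eval z (MvPolynomial.map (algebraMap ℝ ℂ) (vAdj n σ i)))) with hgdef
  have hgt : ∀ t : ℂ, g.eval t =
      MvPolynomial.eval (fun u => z u + t) (MvPolynomial.map (algebraMap ℝ ℂ) (mvEulerian n)) := by
    intro t
    rw [mvEulerian_eq, map_sum (MvPolynomial.map (algebraMap ℝ ℂ)),
      map_sum (MvPolynomial.eval _), hgdef, Polynomial.eval_finset_sum]
    refine Finset.sum_congr rfl fun σ _ => ?_
    rw [Polynomial.eval_prod, map_prod (MvPolynomial.map (algebraMap ℝ ℂ)),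
      map_prod (MvPolynomial.eval _)]
    refine Finset.prod_congr rfl fun i _ => ?_
    rw [eval_vAdj_add n z t σ i]
    simp [add_comm]
  have ha : g.eval 0 =
      MvPolynomial.eval z (MvPolynomial.map (algebraMap ℝ ℂ) (mvEulerian n)) := by
    rw [hgt 0]
    simp only [add_zero]
  have hg0 : g.eval 0 ≠ 0 := by rw [ha]; exact IH z hz
  have hgne : g ≠ 0 := fun h => hg0 (by simp [h])
  have hb : g.derivative.eval 0 =
      MvPolynomial.eval z (MvPolynomial.map (algebraMap ℝ ℂ) (dEuler n)) := by
    rw [hgdef, Polynomial.derivative_sum, Polynomial.eval_finset_sum, dEuler,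
      map_sum (MvPolynomial.map (algebraMap ℝ ℂ)), map_sum (MvPolynomial.eval _)]
    refine Finset.sum_congr rfl fun σ _ => ?_
    rw [Finset.prod_eq_multiset_prod, Polynomial.derivative_prod,
      map_sum (MvPolynomial.map (algebraMap ℝ ℂ)), map_sum (MvPolynomial.eval _)]
    rw [← Finset.sum_eq_multiset_sum, Polynomial.eval_finset_sum]
    refine Finset.sum_congr rfl fun k _ => ?_
    rw [← Finset.erase_val, ← Finset.prod_eq_multiset_prod,
      map_prod (MvPolynomial.map (algebraMap ℝ ℂ)), map_prod (MvPolynomial.eval _)]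
    simp [Polynomial.eval_prod]
  have hroots : ∀ r ∈ g.roots, r.im < 0 := by
    intro r hr
    by_contra hcon
    push_neg at hcon
    have hne : g.eval r ≠ 0 := by
      rw [hgt r]
      apply IH
      intro u
      rw [Complex.add_im]
      have := hz u
      linarith
    exact hne (Polynomial.isRoot_of_mem_roots hr)
  have hsplit := Polynomial.Splits.eq_prod_roots (IsAlgClosed.splits g)
  obtain ⟨h1, h2⟩ := logDeriv_im_le g.roots g.leadingCoeff
    (Polynomial.leadingCoeff_ne_zero.mpr hgne) hroots
  rw [← hsplit] at h2
  rw [← ha, ← hb]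
  exact ⟨hg0, h2⟩

lemma mvEulerian_stable (n : ℕ) :
    ∀ z : Fin (n + 1) ⊕ Fin (n + 1) → ℂ, (∀ u, 0 < (z u).im) →
      MvPolynomial.eval z (MvPolynomial.map (algebraMap ℝ ℂ) (mvEulerian n)) ≠ 0 := by
  induction n with
  | zero =>
    intro z hz
    have h1 : mvEulerian 0 = 1 := by
      rw [mvEulerian_eq]
      simp [Finset.univ_eq_empty, Fintype.card_perm]
    rw [h1]
    simp
  | succ n IH =>
    intro z hz
    set z' : Fin (n + 1) ⊕ Fin (n + 1) → ℂ := z ∘ emb n with hz'def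
    have hz'pos : ∀ u, 0 < (z' u).im := fun u => hz _
    obtain ⟨ha, hratio⟩ := dRatio n IH z' hz'pos
    set a := MvPolynomial.eval z' (MvPolynomial.map (algebraMap ℝ ℂ) (mvEulerian n)) with hadef
    set b := MvPolynomial.eval z' (MvPolynomial.map (algebraMap ℝ ℂ) (dEuler n)) with hbdef
    set x := z (Sum.inl (Fin.last (n + 1))) with hxdef
    set y := z (Sum.inr (Fin.last (n + 1))) with hydef
    have hx : 0 < x.im := hz _
    have hy : 0 < y.im := hz _
    have hx0 : x ≠ 0 := fun h => by simp [h] at hx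
    have hy0 : y ≠ 0 := fun h => by simp [h] at hy
    have heval : MvPolynomial.eval z (MvPolynomial.map (algebraMap ℝ ℂ) (mvEulerian (n + 1)))
        = (x + y) * a + x * y * b := by
      rw [eulerRecursion n]
      simp only [map_add, map_mul, MvPolynomial.map_X, MvPolynomial.map_rename,
        MvPolynomial.eval_X, MvPolynomial.eval_rename]
      rfl
    rw [heval]
    intro hzero
    have hb : b / a = -(x⁻¹ + y⁻¹) := by
      field_simp
      linear_combination hzero
    have hpos : 0 < (b / a).im := by
      rw [hb, Complex.neg_im, Complex.add_im, Complex.inv_im, Complex.inv_im]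
      have h1 : 0 < Complex.normSq x := Complex.normSq_pos.mpr hx0
      have h2 : 0 < Complex.normSq y := Complex.normSq_pos.mpr hy0
      have h3 : 0 < x.im / Complex.normSq x := div_pos hx h1
      have h4 : 0 < y.im / Complex.normSq y := div_pos hy h2
      rw [neg_div, neg_div]
      linarith
    linarith


/-- For every `n ≥ 1`, the multivariate Eulerian polynomial `A_n(x,y)` (which has real
coefficients) is real stable. -/
theorem stmt14 (n : ℕ) (hn : 1 ≤ n) :
    IsStable (MvPolynomial.map (algebraMap ℝ ℂ) (mvEulerian n)) :=
  Or.inr (mvEulerian_stable n)
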